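/- For every b ≥ 1, h_b = ∑_{k=1}^b (−1)^{k+b} ∑_{(α₁,…,α_k) ∈ (ℕ⁺)^k, α₁+⋯+α_k = b} σ_{α₁}⋯σ_{α_k}, expressing complete homogeneous symmetric polynomials in terms of elementary symmetric polynomials. -/

import Mathlib

open Finset

variable {R : Type*} [CommRing R]

/-- The elementary symmetric polynomial `σ_b` evaluated at `x`. -/
def esymmVal {n : ℕ} (x : Fin n → R) (b : ℕ) : R :=
  ∑ s ∈ Finset.powersetCard b (Finset.univ : Finset (Fin n)), ∏ i ∈ s, x i

/-- The complete homogeneous symmetric polynomial `h_b` evaluated at `x`. -/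
def hsymmVal {n : ℕ} (x : Fin n → R) (b : ℕ) : R :=
  ∑ d ∈ Finset.Nat.antidiagonalTuple n b, ∏ i : Fin n, x i ^ d i

lemma esymmVal_zero {n : ℕ} (x : Fin n → R) : esymmVal x 0 = 1 := by
  simp [esymmVal]

lemma hsymmVal_zero {n : ℕ} (x : Fin n → R) : hsymmVal x 0 = 1 := by
  simp [hsymmVal, Finset.Nat.antidiagonalTuple_zero_right]

def Cc {n : ℕ} (x : Fin n → R) (k m : ℕ) : R :=
  ∑ α ∈ (Finset.Nat.antidiagonalTuple k m).filter (fun α => ∀ i, 0 < α i),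
    ∏ i : Fin k, esymmVal x (α i)

lemma Cc_zero_zero {n : ℕ} (x : Fin n → R) : Cc x 0 0 = 1 := by
  simp [Cc, Finset.Nat.antidiagonalTuple_zero_zero]

lemma Cc_zero_left {n : ℕ} (x : Fin n → R) {m : ℕ} (hm : 1 ≤ m) : Cc x 0 m = 0 := by
  cases m with
  | zero => omega
  | succ m => simp [Cc, Finset.Nat.antidiagonalTuple_zero_succ]

lemma Cc_eq_zero {n : ℕ} (x : Fin n → R) {k m : ℕ} (h : m < k) : Cc x k m = 0 := by
  apply Finset.sum_eq_zero
  intro α hα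
  rw [mem_filter, Finset.Nat.mem_antidiagonalTuple] at hα
  exfalso
  have : ∑ _i : Fin k, 1 ≤ ∑ i, α i := Finset.sum_le_sum fun i _ => hα.2 i
  simp only [Finset.sum_const, card_univ, Fintype.card_fin, smul_eq_mul, mul_one] at this
  omega

lemma Cc_succ {n : ℕ} (x : Fin n → R) (k m : ℕ) :
    Cc x (k+1) m = ∑ j ∈ Finset.Icc 1 m, esymmVal x j * Cc x k (m - j) := by
  classical
  unfold Cc
  simp_rw [Finset.mul_sum]
  rw [show (∑ j ∈ Finset.Icc 1 m,
      ∑ α ∈ (Finset.Nat.antidiagonalTuple k (m-j)).filter (fun α => ∀ i, 0 < α i),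
        esymmVal x j * ∏ i : Fin k, esymmVal x (α i)) =
      ∑ p ∈ (Finset.Icc 1 m).sigma (fun j => (Finset.Nat.antidiagonalTuple k (m-j)).filter (fun α => ∀ i, 0 < α i)),
        esymmVal x p.1 * ∏ i : Fin k, esymmVal x (p.2 i) by rw [Finset.sum_sigma]]
  refine Finset.sum_nbij' (fun α => ⟨α 0, Fin.tail α⟩) (fun p => Fin.cons p.1 p.2) ?_ ?_ ?_ ?_ ?_
  · intro α hα
    rw [mem_filter, Finset.Nat.mem_antidiagonalTuple] at hα
    obtain ⟨hsum, hpos⟩ := hα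
    have h0 : α 0 ≤ m := hsum ▸ Finset.single_le_sum (fun i _ => Nat.zero_le _) (mem_univ 0)
    have htail : ∑ i : Fin k, Fin.tail α i = m - α 0 := by
      rw [Fin.sum_univ_succ] at hsum
      simp only [Fin.tail]
      omega
    refine mem_sigma.2 ⟨mem_Icc.2 ⟨hpos 0, h0⟩, mem_filter.2 ⟨Finset.Nat.mem_antidiagonalTuple.2 htail, fun i => hpos i.succ⟩⟩
  · intro p hp
    rw [mem_sigma, mem_Icc, mem_filter, Finset.Nat.mem_antidiagonalTuple] at hp
    obtain ⟨⟨h1, h2⟩, h3, h4⟩ := hp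
    rw [mem_filter, Finset.Nat.mem_antidiagonalTuple]
    constructor
    · rw [Fin.sum_univ_succ]
      simp only [Fin.cons_zero, Fin.cons_succ]
      omega
    · intro i
      refine Fin.cases ?_ ?_ i
      · simp only [Fin.cons_zero]; omega
      · intro j; simpa using h4 j
  · intro α _
    exact Fin.cons_self_tail α
  · intro p _
    simp [Fin.tail_cons]
  · intro α _
    rw [Fin.prod_univ_succ]
    rfl

noncomputable def Hh {n : ℕ} (x : Fin n → R) (m : ℕ) : R := ∑ k ∈ Finset.range (m+1), (-1:R)^k * Cc x k m

lemma Hh_zero {n : ℕ} (x : Fin n → R) : Hh x 0 = 1 := by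
  simp [Hh, Cc_zero_zero]

lemma Hh_rec {n : ℕ} (x : Fin n → R) {m : ℕ} (hm : 1 ≤ m) :
    Hh x m = - ∑ j ∈ Finset.Icc 1 m, esymmVal x j * Hh x (m - j) := by
  have step1 : Hh x m = ∑ k ∈ Finset.range m, (-1:R)^(k+1) * Cc x (k+1) m := by
    rw [Hh, Finset.sum_range_succ']
    simp [Cc_zero_left x hm]
  rw [step1]
  simp_rw [Cc_succ, pow_succ, Finset.mul_sum]
  rw [Finset.sum_comm]
  rw [← neg_eq_iff_eq_neg, ← Finset.sum_neg_distrib]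
  apply Finset.sum_congr rfl
  intro j hj
  rw [mem_Icc] at hj
  have hsub : Finset.range (m - j + 1) ⊆ Finset.range m := by
    apply Finset.range_subset_range.2; omega
  have : Hh x (m - j) = ∑ k ∈ Finset.range m, (-1:R)^k * Cc x k (m - j) := by
    rw [Hh]
    apply Finset.sum_subset hsub
    intro k hk hk'
    rw [mem_range] at hk hk'
    rw [Cc_eq_zero x (by omega), mul_zero]
  rw [this, Finset.mul_sum, ← Finset.sum_neg_distrib]
  apply Finset.sum_congr rfl
  intro k _
  ring

lemma esymm_hsymm_rec {n : ℕ} (x : Fin n → R) {b : ℕ} (hb : 1 ≤ b) :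
    ∑ j ∈ Finset.range (b+1), (-1:R)^j * esymmVal x j * hsymmVal x (b - j) = 0 := by
  classical
  set D : Finset (Finset (Fin n) × (Fin n → ℕ)) :=
    (Finset.univ.powerset ×ˢ Fintype.piFinset fun _ : Fin n => Finset.range (b+1)).filter
      (fun p => p.1.card + ∑ i, p.2 i = b) with hD
  have hmemD : ∀ (S : Finset (Fin n)) (d : Fin n → ℕ), S.card + ∑ i, d i = b → (S, d) ∈ D := by
    intro S d h
    rw [hD, mem_filter, mem_product]
    refine ⟨⟨mem_powerset.2 (subset_univ S), Fintype.mem_piFinset.2 fun i => ?_⟩, h⟩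
    rw [mem_range]
    have : d i ≤ ∑ j, d j := Finset.single_le_sum (fun _ _ => Nat.zero_le _) (mem_univ i)
    dsimp only at h ⊢
    omega
  have hD' : ∀ p ∈ D, p.1.card + ∑ i, p.2 i = b := by
    intro p hp
    rw [hD, mem_filter] at hp
    exact hp.2
  have key : ∑ j ∈ Finset.range (b+1), (-1:R)^j * esymmVal x j * hsymmVal x (b - j)
      = ∑ p ∈ D, (-1:R)^(p.1.card) * ((∏ i ∈ p.1, x i) * ∏ i, x i ^ p.2 i) := by
    have step1 : ∑ j ∈ Finset.range (b+1), (-1:R)^j * esymmVal x j * hsymmVal x (b - j)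
        = ∑ q ∈ (Finset.range (b+1)).sigma
            (fun j => Finset.powersetCard j (Finset.univ : Finset (Fin n)) ×ˢ Finset.Nat.antidiagonalTuple n (b-j)),
          (-1:R)^(q.1) * ((∏ i ∈ q.2.1, x i) * ∏ i, x i ^ q.2.2 i) := by
      rw [Finset.sum_sigma]
      refine Finset.sum_congr rfl fun j _ => ?_
      rw [Finset.sum_product]
      dsimp only
      rw [esymmVal, hsymmVal, mul_assoc, Finset.sum_mul_sum, Finset.mul_sum]
      refine Finset.sum_congr rfl fun S _ => ?_
      rw [Finset.mul_sum]
    rw [step1]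
    refine Finset.sum_nbij' (fun q => q.2) (fun p => ⟨p.1.card, p⟩) ?_ ?_ ?_ ?_ ?_
    · rintro ⟨j, S, d⟩ hq
      rw [mem_sigma, mem_product, Finset.mem_powersetCard, Finset.Nat.mem_antidiagonalTuple, mem_range] at hq
      dsimp only at hq
      obtain ⟨hj, ⟨-, hcard⟩, hsum⟩ := hq
      exact hmemD S d (by omega)
    · rintro ⟨S, d⟩ hp
      have h := hD' _ hp
      dsimp only at h
      rw [mem_sigma, mem_product, Finset.mem_powersetCard, Finset.Nat.mem_antidiagonalTuple, mem_range]
      dsimp only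
      exact ⟨by omega, ⟨subset_univ _, rfl⟩, by omega⟩
    · rintro ⟨j, S, d⟩ hq
      rw [mem_sigma, mem_product, Finset.mem_powersetCard] at hq
      have : S.card = j := hq.2.1.2
      subst this
      rfl
    · intro p _; rfl
    · rintro ⟨j, S, d⟩ hq
      rw [mem_sigma, mem_product, Finset.mem_powersetCard] at hq
      have : S.card = j := hq.2.1.2
      rw [this]
  rw [key]
  -- the involution
  set pick : Finset (Fin n) × (Fin n → ℕ) → Finset (Fin n) :=
    fun p => p.1 ∪ Finset.univ.filter (fun i => 0 < p.2 i) with hpick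
  have hpicknon : ∀ p ∈ D, (pick p).Nonempty := by
    intro p hp
    rw [Finset.nonempty_iff_ne_empty]
    intro hemp
    rw [hpick] at hemp
    simp only [Finset.union_eq_empty, Finset.filter_eq_empty_iff] at hemp
    have h := hD' p hp
    have : ∀ i, p.2 i = 0 := fun i => by have := hemp.2 (mem_univ i); omega
    rw [hemp.1] at h
    simp [this] at h
    omega
  set g : Finset (Fin n) × (Fin n → ℕ) → Finset (Fin n) × (Fin n → ℕ) := fun p =>
    if hT : (pick p).Nonempty then
      (if (pick p).min' hT ∈ p.1 then
        (p.1.erase ((pick p).min' hT),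
          Function.update p.2 ((pick p).min' hT) (p.2 ((pick p).min' hT) + 1))
      else (insert ((pick p).min' hT) p.1,
          Function.update p.2 ((pick p).min' hT) (p.2 ((pick p).min' hT) - 1)))
    else p with hg
  have hmain : ∀ p ∈ D, (g p ∈ D ∧ g (g p) = p) ∧
      ((-1:R)^(p.1.card) * ((∏ i ∈ p.1, x i) * ∏ i, x i ^ p.2 i)
        + (-1:R)^((g p).1.card) * ((∏ i ∈ (g p).1, x i) * ∏ i, x i ^ (g p).2 i) = 0) ∧
      g p ≠ p := by
    rintro ⟨S, d⟩ hp
    have hT := hpicknon _ hp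
    set i0 := (pick (S, d)).min' hT with hi0def
    have hi0mem : i0 ∈ pick (S, d) := Finset.min'_mem _ _
    have hb' : S.card + ∑ i, d i = b := hD' _ hp
    have hsum_split : ∑ i, d i = d i0 + ∑ i ∈ Finset.univ.erase i0, d i :=
      (Finset.add_sum_erase _ d (mem_univ i0)).symm
    have hple : ∀ j, j ∈ S ∨ 0 < d j → i0 ≤ j := by
      intro j hj
      refine Finset.min'_le _ _ ?_
      rw [hpick, mem_union]
      rcases hj with h | h
      · exact Or.inl h
      · exact Or.inr (mem_filter.2 ⟨mem_univ j, h⟩)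
    -- product identities
    have hupd : ∀ (v : ℕ), (∏ i, x i ^ (Function.update d i0 v) i)
        = x i0 ^ v * ∏ i ∈ Finset.univ.erase i0, x i ^ d i := by
      intro v
      have hfun : ∀ i : Fin n, x i ^ (Function.update d i0 v) i
          = Function.update (fun i => x i ^ d i) i0 (x i0 ^ v) i := by
        intro i
        rcases eq_or_ne i i0 with rfl | h
        · simp
        · simp [Function.update_of_ne h]
      rw [Finset.prod_congr rfl (fun i _ => hfun i), Finset.prod_update_of_mem (mem_univ i0),
        Finset.sdiff_singleton_eq_erase]
    have hprodd : (∏ i, x i ^ d i) = x i0 ^ d i0 * ∏ i ∈ Finset.univ.erase i0, x i ^ d i :=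
      (Finset.mul_prod_erase _ _ (mem_univ i0)).symm
    by_cases hi0 : i0 ∈ S
    · -- case 1 : move i0 from S to d
      have hcard : 1 ≤ S.card := Finset.card_pos.2 ⟨i0, hi0⟩
      have hgp : g (S, d) = (S.erase i0, Function.update d i0 (d i0 + 1)) := by
        simp only [hg]
        rw [dif_pos hT, if_pos hi0]
      have hsum' : ∑ i, Function.update d i0 (d i0 + 1) i = ∑ i, d i + 1 := by
        have h1 := Finset.sum_update_of_mem (mem_univ i0) d (d i0 + 1)
        rw [Finset.sdiff_singleton_eq_erase] at h1
        omega
      have hmemq : (S.erase i0, Function.update d i0 (d i0 + 1)) ∈ D := by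
        apply hmemD
        rw [Finset.card_erase_of_mem hi0, hsum']
        omega
      refine ⟨⟨hgp ▸ hmemq, ?_⟩, ?_, ?_⟩
      · -- involution
        rw [hgp]
        have hTq : (pick (S.erase i0, Function.update d i0 (d i0 + 1))).Nonempty := by
          refine ⟨i0, ?_⟩
          rw [hpick, mem_union]
          exact Or.inr (mem_filter.2 ⟨mem_univ i0, by simp⟩)
        have hminq : (pick (S.erase i0, Function.update d i0 (d i0 + 1))).min' hTq = i0 := by
          refine le_antisymm (Finset.min'_le _ _ ?_) ?_
          · rw [hpick, mem_union]
            exact Or.inr (mem_filter.2 ⟨mem_univ i0, by simp⟩)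
          · have hlow : ∀ j ∈ pick (S.erase i0, Function.update d i0 (d i0 + 1)), i0 ≤ j := by
              intro j hj
              rw [hpick, mem_union] at hj
              rcases hj with h | h
              · exact hple j (Or.inl (Finset.mem_of_mem_erase h))
              · rw [mem_filter] at h
                dsimp only at h
                rcases eq_or_ne j i0 with rfl | hne
                · exact le_refl _
                · rw [Function.update_of_ne hne] at h
                  exact hple j (Or.inr h.2)
            exact hlow _ (Finset.min'_mem _ _)
        simp only [hg]
        rw [dif_pos hTq, hminq]
        rw [if_neg (Finset.notMem_erase i0 S)]
        rw [Finset.insert_erase hi0, Function.update_self, Function.update_idem]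
        simp only [Nat.add_sub_cancel, Function.update_eq_self]
      · -- signs cancel
        rw [hgp]
        dsimp only
        obtain ⟨c, hc⟩ : ∃ c, S.card = c + 1 := ⟨S.card - 1, by omega⟩
        rw [Finset.card_erase_of_mem hi0, hupd, hprodd,
          show ∏ i ∈ S, x i = x i0 * ∏ i ∈ S.erase i0, x i from
            (Finset.mul_prod_erase _ _ hi0).symm,
          hc, Nat.add_sub_cancel, pow_succ, pow_succ]
        ring
      · -- not fixed
        rw [hgp]
        intro h
        have := congrArg Prod.fst h
        dsimp only at this
        have h2 : i0 ∉ S := by rw [← this]; exact Finset.notMem_erase i0 S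
        exact h2 hi0
    · -- case 2 : move i0 from d to S
      have hd0 : 0 < d i0 := by
        rw [hpick, mem_union] at hi0mem
        rcases hi0mem with h | h
        · exact absurd h hi0
        · exact (mem_filter.1 h).2
      have hgp : g (S, d) = (insert i0 S, Function.update d i0 (d i0 - 1)) := by
        simp only [hg]
        rw [dif_pos hT, if_neg hi0]
      have hsum' : ∑ i, Function.update d i0 (d i0 - 1) i = ∑ i, d i - 1 := by
        have h1 := Finset.sum_update_of_mem (mem_univ i0) d (d i0 - 1)
        rw [Finset.sdiff_singleton_eq_erase] at h1
        omega
      have hmemq : (insert i0 S, Function.update d i0 (d i0 - 1)) ∈ D := by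
        apply hmemD
        rw [Finset.card_insert_of_notMem hi0, hsum']
        omega
      refine ⟨⟨hgp ▸ hmemq, ?_⟩, ?_, ?_⟩
      · rw [hgp]
        have hTq : (pick (insert i0 S, Function.update d i0 (d i0 - 1))).Nonempty := by
          refine ⟨i0, ?_⟩
          rw [hpick, mem_union]
          exact Or.inl (mem_insert_self _ _)
        have hminq : (pick (insert i0 S, Function.update d i0 (d i0 - 1))).min' hTq = i0 := by
          refine le_antisymm (Finset.min'_le _ _ ?_) ?_
          · rw [hpick, mem_union]
            exact Or.inl (mem_insert_self _ _)
          · have hlow : ∀ j ∈ pick (insert i0 S, Function.update d i0 (d i0 - 1)), i0 ≤ j := by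
              intro j hj
              rw [hpick, mem_union] at hj
              rcases hj with h | h
              · rcases Finset.mem_insert.1 h with rfl | h
                · exact le_refl _
                · exact hple j (Or.inl h)
              · rw [mem_filter] at h
                dsimp only at h
                rcases eq_or_ne j i0 with rfl | hne
                · exact le_refl _
                · rw [Function.update_of_ne hne] at h
                  exact hple j (Or.inr h.2)
            exact hlow _ (Finset.min'_mem _ _)
        simp only [hg]
        rw [dif_pos hTq, hminq]
        rw [if_pos (mem_insert_self i0 S)]
        rw [Finset.erase_insert hi0, Function.update_self, Function.update_idem]
        rw [show d i0 - 1 + 1 = d i0 by omega]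
        simp only [Function.update_eq_self]
      · rw [hgp]
        dsimp only
        obtain ⟨e, he⟩ : ∃ e, d i0 = e + 1 := ⟨d i0 - 1, by omega⟩
        rw [Finset.card_insert_of_notMem hi0, hupd, hprodd, Finset.prod_insert hi0,
          he, Nat.add_sub_cancel, pow_succ, pow_succ]
        ring
      · rw [hgp]
        intro h
        have := congrArg Prod.fst h
        dsimp only at this
        exact hi0 (this ▸ mem_insert_self i0 S)
  refine Finset.sum_involution (fun p _ => g p) ?_ ?_ ?_ ?_
  · intro p hp
    exact ((hmain p hp).2).1
  · intro p hp _
    exact ((hmain p hp).2).2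
  · intro p hp
    exact ((hmain p hp).1).1
  · intro p hp
    exact ((hmain p hp).1).2

lemma hsymmVal_eq_Hh {n : ℕ} (x : Fin n → R) : ∀ b, hsymmVal x b = (-1:R)^b * Hh x b := by
  intro b
  induction b using Nat.strong_induction_on with
  | _ b ih =>
    rcases Nat.eq_zero_or_pos b with rfl | hb
    · simp [hsymmVal_zero, Hh_zero]
    · have hrec := esymm_hsymm_rec x hb
      rw [Finset.sum_range_succ'] at hrec
      simp only [pow_zero, esymmVal_zero, one_mul, Nat.sub_zero] at hrec
      have hIH : ∀ j ∈ Finset.range b, (-1:R)^(j+1) * esymmVal x (j+1) * hsymmVal x (b - (j+1))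
          = (-1:R)^b * (esymmVal x (j+1) * Hh x (b - (j+1))) := by
        intro j hj
        rw [mem_range] at hj
        rw [ih _ (by omega),
          show (-1:R)^(j+1) * esymmVal x (j+1) * ((-1:R)^(b-(j+1)) * Hh x (b-(j+1)))
            = ((-1:R)^(j+1) * (-1:R)^(b-(j+1))) * (esymmVal x (j+1) * Hh x (b-(j+1))) by ring,
          ← pow_add, show j+1+(b-(j+1)) = b by omega]
      rw [Finset.sum_congr rfl hIH, ← Finset.mul_sum] at hrec
      have hHh : Hh x b = - ∑ j ∈ Finset.range b, esymmVal x (j+1) * Hh x (b - (j+1)) := by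
        rw [Hh_rec x hb, ← Finset.Ico_add_one_right_eq_Icc, Finset.sum_Ico_eq_sum_range]
        congr 1
        refine Finset.sum_congr (by simp) fun j _ => ?_
        rw [Nat.add_comm 1 j]
      rw [hHh]
      linear_combination hrec

/-- `h_b = ∑_{k=1}^b (−1)^{k+b} ∑_{α₁+⋯+α_k = b, αᵢ ≥ 1} σ_{α₁}⋯σ_{α_k}`. -/
theorem hsymm_eq_alternating_sum_esymm {n : ℕ} (x : Fin n → R) (b : ℕ) (hb : 1 ≤ b) :
    hsymmVal x b =
      ∑ k ∈ Finset.Icc 1 b, (-1 : R) ^ (k + b) *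
        ∑ α ∈ (Finset.Nat.antidiagonalTuple k b).filter (fun α => ∀ i, 0 < α i),
          ∏ i : Fin k, esymmVal x (α i) := by
  have key : hsymmVal x b = ∑ k ∈ Finset.Icc 1 b, (-1 : R) ^ (k + b) * Cc x k b := by
    rw [hsymmVal_eq_Hh x b, Hh, Finset.range_eq_Ico,
      Finset.sum_eq_sum_Ico_succ_bot (by omega : 0 < b + 1)]
    rw [pow_zero, one_mul, Cc_zero_left x hb, Finset.Ico_add_one_right_eq_Icc, mul_add, mul_zero, zero_add,
      Finset.mul_sum]
    refine Finset.sum_congr rfl fun k _ => ?_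
    rw [pow_add]
    ring
  rw [key]
  rfl
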